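/- arXiv:2308.08874 — 5 statements merged into one kernel-verified Lean document; each statement's English description precedes it below -/
import Mathlib

section
/- Let k, m ≥ 1 be integers and α ≥ 1 a real number. Let D be a probability distribution on [k]^m with D(x) > 0 for every x ∈ [k]^m, such that for all x, x' ∈ [k]^m that differ in exactly one coordinate, D(x)/D(x') ≤ α (i.e., D is α-log-Lipschitz). Then D is (α·k/(α + k − 1))-dispersed. -/
/-- A distribution `D` on `[k]^m` is `ρ`-dispersed if for every coordinate `j` and every
point `x`, `D x ≤ ρ · (1/k) · ∑_t D (x with j-th coordinate replaced by t)`. -/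
def Dispersed {k m : ℕ} (ρ : ℝ) (D : (Fin m → Fin k) → ℝ) : Prop :=
  ∀ (j : Fin m) (x : Fin m → Fin k),
    D x ≤ ρ * (1 / (k : ℝ)) * ∑ t : Fin k, D (Function.update x j t)

/-- Any `α`-log-Lipschitz probability distribution on `[k]^m` (everywhere positive, with
`D x / D x' ≤ α` whenever `x, x'` differ in exactly one coordinate) is
`(α·k/(α + k − 1))`-dispersed. -/
theorem logLipschitz_dispersed {k m : ℕ} (hk : 1 ≤ k) (hm : 1 ≤ m)
    (α : ℝ) (hα : 1 ≤ α)
    (D : (Fin m → Fin k) → ℝ)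
    (hDpos : ∀ x, 0 < D x) (hD1 : ∑ x, D x = 1)
    (hLip : ∀ (x : Fin m → Fin k) (j : Fin m) (t : Fin k), t ≠ x j →
      D x / D (Function.update x j t) ≤ α) :
    Dispersed (α * (k : ℝ) / (α + (k : ℝ) - 1)) D := by
  intro j x
  have hk' : (1 : ℝ) ≤ (k : ℝ) := by exact_mod_cast hk
  have hα0 : (0 : ℝ) < α := by linarith
  have hden : (0 : ℝ) < α + (k : ℝ) - 1 := by linarith
  have hDx : 0 < D x := hDpos x
  -- lower bound the sum
  have hS : D x + ((k : ℝ) - 1) * (D x / α) ≤ ∑ t : Fin k, D (Function.update x j t) := by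
    rw [← Finset.sum_erase_add _ _ (Finset.mem_univ (x j)), Function.update_eq_self]
    have hbound : ∀ t ∈ Finset.univ.erase (x j), D x / α ≤ D (Function.update x j t) := by
      intro t ht
      have htne : t ≠ x j := (Finset.mem_erase.mp ht).1
      have h1 := hLip x j t htne
      have h2 : 0 < D (Function.update x j t) := hDpos _
      rw [div_le_iff₀ h2] at h1
      rw [div_le_iff₀ hα0]
      linarith [mul_le_mul_of_nonneg_left h1 (le_of_lt (hDpos (Function.update x j t))),
        mul_pos h2 hα0]
    have hsum : ((Finset.univ.erase (x j)).card : ℝ) * (D x / α)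
        ≤ ∑ t ∈ Finset.univ.erase (x j), D (Function.update x j t) := by
      calc ((Finset.univ.erase (x j)).card : ℝ) * (D x / α)
          = ∑ _t ∈ Finset.univ.erase (x j), D x / α := by
            rw [Finset.sum_const, nsmul_eq_mul]
        _ ≤ _ := Finset.sum_le_sum hbound
    have hcard : ((Finset.univ.erase (x j)).card : ℝ) = (k : ℝ) - 1 := by
      rw [Finset.card_erase_of_mem (Finset.mem_univ _), Finset.card_univ, Fintype.card_fin]
      have : (1 : ℕ) ≤ k := hk
      push_cast [Nat.cast_sub this]
      ring
    rw [hcard] at hsum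
    linarith
  have hkey : α * (k : ℝ) / (α + (k : ℝ) - 1) * (1 / (k : ℝ)) *
      (D x + ((k : ℝ) - 1) * (D x / α)) = D x := by
    field_simp
    ring
  have hcoef : 0 < α * (k : ℝ) / (α + (k : ℝ) - 1) * (1 / (k : ℝ)) := by
    positivity
  calc D x = _ := hkey.symm
    _ ≤ _ := by
      apply mul_le_mul_of_nonneg_left hS (le_of_lt hcoef)
end

section
/- Let F be a finite field with |F| ≥ 2, let n ≥ 1, and let d : F^n × F^n → ℝ be a metric (nonnegative, symmetric, vanishing on the diagonal, and satisfying the triangle inequality) such that: (i) d(x+z, y+z) = d(x,y) for all x, y, z ∈ F^n, and (ii) d(a·x, a·y) = d(x,y) for all x, y ∈ F^n and every nonzero a ∈ F. Let S and T be F-linear subspaces of F^n and let ε > 0. If there exists s ∈ S with d(s,t) > ε for every t ∈ T, then the number of elements r ∈ S for which there exists t ∈ T with d(r,t) ≤ ε/2 is at most |S| / (|F| − 1). -/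
/-- If `d` is a shift- and (nonzero-)scaling-invariant metric on `F^n`, `S, T` are linear
subspaces, and some `s ∈ S` has `d(s,t) > ε` for all `t ∈ T`, then the number of `r ∈ S`
that are `(ε/2)`-close to `T` is at most `|S| / (|F| − 1)`. -/
theorem far_point_in_subspace_count {F : Type*} [Field F] [Fintype F]
    (hF : 2 ≤ Fintype.card F) {n : ℕ} (hn : 1 ≤ n)
    (d : (Fin n → F) → (Fin n → F) → ℝ)
    (hnonneg : ∀ x y, 0 ≤ d x y)
    (hrefl : ∀ x, d x x = 0)
    (hsymm : ∀ x y, d x y = d y x)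
    (htri : ∀ x y z, d x z ≤ d x y + d y z)
    (hshift : ∀ x y z, d (x + z) (y + z) = d x y)
    (hscale : ∀ a : F, a ≠ 0 → ∀ x y, d (a • x) (a • y) = d x y)
    (S T : Submodule F (Fin n → F)) (ε : ℝ) (hε : 0 < ε)
    (hfar : ∃ s ∈ S, ∀ t ∈ T, ε < d s t) :
    ((Set.ncard {r : Fin n → F | r ∈ S ∧ ∃ t ∈ T, d r t ≤ ε / 2}) : ℝ)
      ≤ (Nat.card S : ℝ) / ((Fintype.card F : ℝ) - 1) := by
  classical
  obtain ⟨s, hsS, hs⟩ := hfar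
  set B : Set (Fin n → F) := {r : Fin n → F | r ∈ S ∧ ∃ t ∈ T, d r t ≤ ε / 2} with hBdef
  -- key metric estimate
  have hd2 : ∀ x y t t' : Fin n → F, d x t ≤ ε/2 → d y t' ≤ ε/2 →
      d (x - y) (t - t') ≤ ε := by
    intro x y t t' h1 h2
    have e1 : d (x - y) (t - t') = d (x - y + t') t := by
      rw [← hshift (x - y) (t - t') t']
      congr 1
      abel
    have e2 : d (x - y + t') x = d y t' := by
      rw [hsymm]
      have h := hshift x (x - y + t') (y - x)
      rw [← h]
      congr 1 <;> abel
    calc d (x - y) (t - t') = d (x - y + t') t := e1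
      _ ≤ d (x - y + t') x + d x t := htri _ _ _
      _ = d y t' + d x t := by rw [e2]
      _ ≤ ε/2 + ε/2 := add_le_add h2 h1
      _ = ε := by ring
  -- the injection
  have hinj : Function.Injective (fun p : B × Fˣ =>
      (⟨p.1.1 + (p.2 : F) • s, S.add_mem p.1.2.1 (S.smul_mem _ hsS)⟩ : S)) := by
    rintro ⟨⟨r1, hr1⟩, u1⟩ ⟨⟨r2, hr2⟩, u2⟩ h
    simp only [Subtype.mk.injEq] at h
    have hu : u1 = u2 := by
      by_contra hu
      have hc : (u2 : F) - (u1 : F) ≠ 0 := by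
        rw [sub_ne_zero]
        exact fun he => hu (Units.ext he.symm)
      have hdiff : r1 - r2 = ((u2 : F) - (u1 : F)) • s := by
        rw [sub_smul]
        have h' : r1 + (u1 : F) • s - ((u1 : F) • s + r2) = r2 + (u2 : F) • s - ((u1 : F) • s + r2) := by rw [h]
        calc r1 - r2 = r1 + (u1 : F) • s - ((u1 : F) • s + r2) := by abel
          _ = r2 + (u2 : F) • s - ((u1 : F) • s + r2) := h'
          _ = (u2 : F) • s - (u1 : F) • s := by abel
      obtain ⟨t1, ht1, hdt1⟩ := hr1.2
      obtain ⟨t2, ht2, hdt2⟩ := hr2.2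
      set c : F := (u2 : F) - (u1 : F)
      have hle : d (c • s) (t1 - t2) ≤ ε := by
        rw [← hdiff]; exact hd2 r1 r2 t1 t2 hdt1 hdt2
      have hsc := hscale c⁻¹ (inv_ne_zero hc) (c • s) (t1 - t2)
      rw [smul_smul, inv_mul_cancel₀ hc, one_smul] at hsc
      have hmem : c⁻¹ • (t1 - t2) ∈ T := T.smul_mem _ (T.sub_mem ht1 ht2)
      have := hs _ hmem
      rw [← hsc] at hle
      linarith
    subst hu
    have : r1 = r2 := by
      apply_fun (fun v => v - (u1 : F) • s) at h
      simpa using h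
    simp [this]
  have hfin : Finite (Fin n → F) := inferInstance
  have hcard : Nat.card (B × Fˣ) ≤ Nat.card S :=
    Nat.card_le_card_of_injective _ hinj
  rw [Nat.card_prod] at hcard
  have hBcard : Nat.card B = B.ncard := Nat.card_coe_set_eq B
  have hUcard : Nat.card Fˣ = Fintype.card F - 1 := by
    rw [Nat.card_eq_fintype_card, Fintype.card_units]
  rw [hBcard, hUcard] at hcard
  have hq : (1 : ℝ) < (Fintype.card F : ℝ) := by exact_mod_cast hF.trans_lt' (by norm_num)
  rw [le_div_iff₀ (by linarith)]
  have : ((B.ncard * (Fintype.card F - 1) : ℕ) : ℝ) ≤ (Nat.card S : ℝ) := by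
    exact_mod_cast hcard
  calc (B.ncard : ℝ) * ((Fintype.card F : ℝ) - 1)
      = ((B.ncard * (Fintype.card F - 1) : ℕ) : ℝ) := by
        push_cast [Nat.cast_sub (by omega : 1 ≤ Fintype.card F)]
        ring
    _ ≤ (Nat.card S : ℝ) := this
end

section
/- Let κ ≥ 1 be an integer and k = 2^κ. Let ρ > 0 and ε > 0 be real numbers, and let ε_1,...,ε_k be nonnegative reals with ∑_{i=1}^{k} ε_i > k·ε/ρ. Then there exist an integer b ∈ {0,1,...,κ} and a subset I ⊆ {1,...,k} such that ε_i ≥ k·ε/(2^{b+1}·ρ) for every i ∈ I and |I| ≥ 2^b/(4κ). -/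
/-- If `∑ εᵢ > k·ε/ρ` with `k = 2^κ`, then there is a dyadic level `b ≤ κ` and a set `I`
of indices with `εᵢ ≥ k·ε/(2^{b+1}·ρ)` for all `i ∈ I` and `|I| ≥ 2^b/(4κ)`. -/
theorem dyadic_level_many_large {κ : ℕ} (hκ : 1 ≤ κ) {k : ℕ} (hk : k = 2 ^ κ)
    (ρ ε : ℝ) (hρ : 0 < ρ) (hε : 0 < ε)
    (εs : Fin k → ℝ) (hεs0 : ∀ i, 0 ≤ εs i)
    (hsum : (k : ℝ) * ε / ρ < ∑ i, εs i) :
    ∃ (b : ℕ) (I : Finset (Fin k)), b ≤ κ ∧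
      (∀ i ∈ I, (k : ℝ) * ε / ((2 : ℝ) ^ (b + 1) * ρ) ≤ εs i) ∧
      (2 : ℝ) ^ b / (4 * (κ : ℝ)) ≤ (I.card : ℝ) := by
  by_contra h
  push_neg at h
  set T : ℝ := (k : ℝ) * ε / ρ with hT
  have hk0 : 0 < k := by rw [hk]; positivity
  have hkR : (0 : ℝ) < (k : ℝ) := by exact_mod_cast hk0
  have hT0 : 0 < T := by rw [hT]; positivity
  have hκR : (0 : ℝ) < (κ : ℝ) := by exact_mod_cast hκ
  set S : ℕ → Finset (Fin k) :=
    fun b => Finset.univ.filter (fun i => T / 2 ^ (b + 1) ≤ εs i) with hS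
  have hmemS : ∀ b i, i ∈ S b ↔ T / 2 ^ (b + 1) ≤ εs i := by
    intro b i; simp [hS]
  have hcard : ∀ b ≤ κ, ((S b).card : ℝ) < 2 ^ b / (4 * κ) := by
    intro b hb
    refine h b (S b) hb ?_
    intro i hi
    have hi' := (hmemS b i).1 hi
    have : (k : ℝ) * ε / ((2 : ℝ) ^ (b + 1) * ρ) = T / 2 ^ (b + 1) := by
      rw [hT, mul_comm ((2:ℝ) ^ (b+1)) ρ, ← div_div]
    rw [this]; exact hi'
  have hS0 : S 0 = ∅ := by
    have h0 := hcard 0 (Nat.zero_le κ)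
    have h1 : (2 : ℝ) ^ 0 / (4 * κ) ≤ 1 := by
      rw [pow_zero]
      rw [div_le_one (by positivity)]
      have hκR1 : (1:ℝ) ≤ (κ:ℝ) := by exact_mod_cast hκ
      nlinarith
    have : ((S 0).card : ℝ) < 1 := lt_of_lt_of_le h0 h1
    have : (S 0).card = 0 := by exact_mod_cast Nat.lt_one_iff.mp (by exact_mod_cast this)
    exact Finset.card_eq_zero.mp this
  have hmono : ∀ n, S n ⊆ S (n + 1) := by
    intro n i hi
    rw [hmemS] at hi ⊢
    refine le_trans ?_ hi
    apply div_le_div_of_nonneg_left hT0.le (by positivity)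
    exact pow_le_pow_right₀ (by norm_num) (by omega)
  have key : ∀ b, ∑ i ∈ S b, εs i ≤ ∑ j ∈ Finset.Icc 1 b, ((S j).card : ℝ) * (T / 2 ^ j) := by
    intro b
    induction b with
    | zero => simp [hS0]
    | succ n ih =>
      rw [Finset.sum_Icc_succ_top (by omega : 1 ≤ n + 1)]
      have hsplit : ∑ i ∈ S (n + 1), εs i
          = ∑ i ∈ S (n + 1) \ S n, εs i + ∑ i ∈ S n, εs i :=
        (Finset.sum_sdiff (hmono n)).symm
      have h2 : ∑ i ∈ S (n + 1) \ S n, εs i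
          ≤ ∑ _i ∈ S (n + 1) \ S n, (T / 2 ^ (n + 1)) := by
        apply Finset.sum_le_sum
        intro i hi
        have hni : i ∉ S n := (Finset.mem_sdiff.mp hi).2
        rw [hmemS] at hni
        push_neg at hni
        exact hni.le
      have h3 : ∑ _i ∈ S (n + 1) \ S n, (T / 2 ^ (n + 1))
          = ((S (n + 1) \ S n).card : ℝ) * (T / 2 ^ (n + 1)) := by
        rw [Finset.sum_const, nsmul_eq_mul]
      have h4 : ((S (n + 1) \ S n).card : ℝ) * (T / 2 ^ (n + 1))
          ≤ ((S (n + 1)).card : ℝ) * (T / 2 ^ (n + 1)) := by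
        gcongr
        exact Finset.sdiff_subset
      linarith
  -- now bound the whole sum
  have hbound1 : ∑ i ∈ S κ, εs i ≤ T / 4 := by
    calc ∑ i ∈ S κ, εs i ≤ ∑ j ∈ Finset.Icc 1 κ, ((S j).card : ℝ) * (T / 2 ^ j) := key κ
      _ ≤ ∑ j ∈ Finset.Icc 1 κ, (2 ^ j / (4 * κ)) * (T / 2 ^ j) := by
          apply Finset.sum_le_sum
          intro j hj
          have hjκ : j ≤ κ := (Finset.mem_Icc.mp hj).2
          gcongr
          exact (hcard j hjκ).le
      _ = ∑ _j ∈ Finset.Icc 1 κ, T / (4 * κ) := by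
          apply Finset.sum_congr rfl
          intro j _
          field_simp
      _ = (κ : ℝ) * (T / (4 * κ)) := by
          rw [Finset.sum_const, nsmul_eq_mul, Nat.card_Icc]
          norm_num
      _ = T / 4 := by field_simp
  have hbound2 : ∑ i ∈ Finset.univ \ S κ, εs i ≤ T / 2 := by
    calc ∑ i ∈ Finset.univ \ S κ, εs i
        ≤ ∑ _i ∈ (Finset.univ \ S κ : Finset (Fin k)), (T / 2 ^ (κ + 1)) := by
          apply Finset.sum_le_sum
          intro i hi
          have : i ∉ S κ := (Finset.mem_sdiff.mp hi).2
          rw [hmemS] at this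
          push_neg at this
          exact this.le
      _ = ((Finset.univ \ S κ : Finset (Fin k)).card : ℝ) * (T / 2 ^ (κ + 1)) := by
          rw [Finset.sum_const, nsmul_eq_mul]
      _ ≤ (k : ℝ) * (T / 2 ^ (κ + 1)) := by
          have hcc : ((Finset.univ \ S κ : Finset (Fin k)).card : ℝ) ≤ (k : ℝ) := by
            have := Finset.card_le_card (Finset.sdiff_subset (s := (Finset.univ : Finset (Fin k))) (t := S κ))
            simp at this
            exact_mod_cast this
          exact mul_le_mul_of_nonneg_right hcc (by positivity)
      _ = T / 2 := by
          have : (k : ℝ) = 2 ^ κ := by rw [hk]; push_cast; ring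
          rw [this, pow_succ]
          field_simp
  have htotal : ∑ i, εs i ≤ 3 * T / 4 := by
    have : ∑ i, εs i = ∑ i ∈ S κ, εs i + ∑ i ∈ Finset.univ \ S κ, εs i := by
      rw [add_comm, Finset.sum_sdiff (Finset.subset_univ _)]
    rw [this]; linarith
  linarith
end

section
/- Let n ≥ 1 and let p_1,...,p_n be nonnegative reals with ∑_{i=1}^{n} p_i = 1. Define a_i := ⌊6n·p_i⌋ + 2 for i ∈ {1,...,n}. Then: (i) ∑_{i=1}^{n} a_i ≤ 8n, so that a_{n+1} := 8n − ∑_{i=1}^{n} a_i is a nonnegative integer; (ii) 0 ≤ a_i ≤ 8n for every i ∈ {1,...,n+1} and ∑_{i=1}^{n+1} a_i = 8n, so that D'(i) := a_i/(8n) defines an 8n-grained probability distribution on {1,...,n+1}; and (iii) a_i/(8n) ≥ p_i/2 for every i ∈ {1,...,n}. -/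
/-- The last granularity output by the granularising algorithm: `a_{n+1} = 8n − ∑ᵢ aᵢ`. -/
def lastGrain {n : ℕ} (a : Fin n → ℕ) : ℕ := 8 * n - ∑ i, a i

/-- The `8n`-grained distribution on `{1,...,n+1}` defined by the granularities:
`D'(i) = aᵢ/(8n)` for `i ≤ n` and `D'(n+1) = a_{n+1}/(8n)`. -/
noncomputable def granDist {n : ℕ} (a : Fin n → ℕ) : Fin (n + 1) → ℝ :=
  Fin.snoc (fun i => (a i : ℝ) / (8 * n)) ((lastGrain a : ℝ) / (8 * n))

/-- Properties of the granularising algorithm `aᵢ = ⌊6n·pᵢ⌋ + 2`: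
(i) `∑ aᵢ ≤ 8n`, so `a_{n+1} = 8n − ∑ aᵢ` is a nonnegative integer;
(ii) `0 ≤ aᵢ ≤ 8n` for all `i ∈ {1,...,n+1}`, they sum to `8n`, and `D'(i) = aᵢ/(8n)`
defines an `8n`-grained probability distribution on `{1,...,n+1}`;
(iii) `aᵢ/(8n) ≥ pᵢ/2` for every `i ∈ {1,...,n}`. -/
theorem granularise_properties {n : ℕ} (hn : 1 ≤ n)
    (p : Fin n → ℝ) (hp0 : ∀ i, 0 ≤ p i) (hp1 : ∑ i, p i = 1)
    (a : Fin n → ℕ) (ha : ∀ i, a i = ⌊(6 * (n : ℝ)) * p i⌋₊ + 2) :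
    ((∑ i, a i) ≤ 8 * n) ∧
    ((∀ i, a i ≤ 8 * n) ∧ lastGrain a ≤ 8 * n ∧ (∑ i, a i) + lastGrain a = 8 * n) ∧
    ((∀ j : Fin (n + 1), 0 ≤ granDist a j) ∧ (∑ j, granDist a j = 1) ∧
      (∀ j : Fin (n + 1), ∃ c : ℕ, granDist a j = (c : ℝ) / (8 * n))) ∧
    (∀ i : Fin n, p i / 2 ≤ (a i : ℝ) / (8 * n)) := by
  have hn' : (0:ℝ) < n := by exact_mod_cast hn
  have hfloor : ∀ i, (⌊(6 * (n:ℝ)) * p i⌋₊ : ℝ) ≤ 6 * n * p i := fun i =>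
    Nat.floor_le (mul_nonneg (by positivity) (hp0 i))
  have hsumR : (∑ i, (a i : ℝ)) ≤ 8 * n := by
    calc (∑ i, (a i : ℝ)) = ∑ i, ((⌊(6*(n:ℝ)) * p i⌋₊ : ℝ) + 2) := by
          refine Finset.sum_congr rfl fun i _ => ?_
          rw [ha i]; push_cast; ring
      _ ≤ ∑ i, (6 * (n:ℝ) * p i + 2) :=
          Finset.sum_le_sum (fun i _ => by linarith [hfloor i])
      _ = 6 * n * (∑ i, p i) + 2 * n := by
          rw [Finset.sum_add_distrib, ← Finset.mul_sum]
          simp [Finset.card_univ]; ring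
      _ = 8 * n := by rw [hp1]; ring
  have hsumN : (∑ i, a i) ≤ 8 * n := by exact_mod_cast hsumR
  have hai : ∀ i, a i ≤ 8 * n := fun i =>
    le_trans (Finset.single_le_sum (fun j _ => Nat.zero_le (a j)) (Finset.mem_univ i)) hsumN
  have hlast : lastGrain a ≤ 8 * n := Nat.sub_le _ _
  have hadd : (∑ i, a i) + lastGrain a = 8 * n := Nat.add_sub_cancel' hsumN
  refine ⟨hsumN, ⟨hai, hlast, hadd⟩, ⟨?_, ?_, ?_⟩, ?_⟩
  · intro j
    induction j using Fin.lastCases with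
    | last => simp only [granDist, Fin.snoc_last]; positivity
    | cast i => simp only [granDist, Fin.snoc_castSucc]; positivity
  · rw [Fin.sum_univ_castSucc]
    simp only [granDist, Fin.snoc_castSucc, Fin.snoc_last]
    rw [← Finset.sum_div, ← add_div, div_eq_one_iff_eq (by positivity)]
    exact_mod_cast hadd
  · intro j
    induction j using Fin.lastCases with
    | last => exact ⟨lastGrain a, by simp [granDist, Fin.snoc_last]⟩
    | cast i => exact ⟨a i, by simp [granDist, Fin.snoc_castSucc]⟩
  · intro i
    rw [div_le_div_iff₀ (by norm_num) (by positivity)]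
    have h1 : (6 * (n:ℝ)) * p i < ⌊(6 * (n:ℝ)) * p i⌋₊ + 1 := Nat.lt_floor_add_one _
    have h2 : (a i : ℝ) = ⌊(6 * (n:ℝ)) * p i⌋₊ + 2 := by rw [ha i]; push_cast; ring
    nlinarith [hp0 i, hn']
end

section
/- Let n ≥ 1, let ε > 0, let p_1,...,p_n be nonnegative reals with ∑_{i=1}^{n} p_i = 1, and let D be the probability distribution on {1,...,n} with D(i) = p_i. Let a_1,...,a_{n+1} be the output of the granularising algorithm on p, and let D' be the probability distribution on {1,...,n+1} with D'(i) = a_i/(8n). Let X ∈ {0,1}^n, let L be a nonempty subset of {0,1}^n, let X' := g^cat(X) ∈ {0,1}^{n+1}, and let L_0 := {g^cat(Y) : Y ∈ L}. If d_D(X, L) > ε, then d_{D'}(X', L_0) > ε/2. Moreover, if X ∈ L then X' ∈ L_0. -/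
/-- Distance between two functions along a distribution `D` on a finite index set:
`d_D(x,y) = ∑_{i : x i ≠ y i} D i`. -/
noncomputable def dDist {α β : Type*} [Fintype α] (D : α → ℝ) (x y : α → β) : ℝ :=
  letI := Classical.decEq β
  ∑ i, if x i = y i then 0 else D i

/-- Distance from a point to a (nonempty) set of functions:
`d_D(x,L) = min_{y ∈ L} d_D(x,y)`. -/
noncomputable def dSetDist {α β : Type*} [Fintype α] (D : α → ℝ) (x : α → β)
    (L : Set (α → β)) : ℝ :=
  sInf ((fun y => dDist D x y) '' L)

/-- `g^cat(X)` appends a `0` to the string `X ∈ {0,1}^n`. -/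
def gcatS {n : ℕ} (X : Fin n → Bool) : Fin (n + 1) → Bool := Fin.snoc X false

/-- Granularisation preserves distances: if `d_D(X,L) > ε` then
`d_{D'}(g^cat(X), L₀) > ε/2`, and if `X ∈ L` then `g^cat(X) ∈ L₀`. -/
theorem granularise_preserves_distance {n : ℕ} (hn : 1 ≤ n) (ε : ℝ) (hε : 0 < ε)
    (p : Fin n → ℝ) (hp0 : ∀ i, 0 ≤ p i) (hp1 : ∑ i, p i = 1)
    (a : Fin n → ℕ) (ha : ∀ i, a i = ⌊(6 * (n : ℝ)) * p i⌋₊ + 2)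
    (X : Fin n → Bool) (L : Set (Fin n → Bool)) (hL : L.Nonempty) :
    (ε < dSetDist p X L →
      ε / 2 < dSetDist (granDist a) (gcatS X) (gcatS '' L)) ∧
    (X ∈ L → gcatS X ∈ gcatS '' L) := by
  classical
  have hn0 : (0:ℝ) < 8 * n := by positivity
  -- pointwise bound on the new distribution
  have hpt : ∀ i, p i / 2 ≤ (a i : ℝ) / (8 * n) := by
    intro i
    have h1 : 6 * (n:ℝ) * p i < (a i : ℝ) := by
      rw [ha i]
      push_cast
      have := Nat.lt_floor_add_one (6 * (n:ℝ) * p i)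
      linarith
    rw [div_le_div_iff₀ (by norm_num) hn0]
    nlinarith [hp0 i]
  -- key comparison of distances
  have key : ∀ Y : Fin n → Bool,
      dDist p X Y / 2 ≤ dDist (granDist a) (gcatS X) (gcatS Y) := by
    intro Y
    unfold dDist granDist gcatS
    rw [Fin.sum_univ_castSucc]
    simp only [Fin.snoc_castSucc, Fin.snoc_last, if_pos rfl, if_true, add_zero,
      Finset.sum_div]
    apply Finset.sum_le_sum
    intro i _
    split_ifs
    · norm_num
    · exact hpt i
  constructor
  · intro hd
    -- in L₀, every distance is at least dSetDist p X L / 2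
    have hS : BddBelow ((fun y => dDist p X y) '' L) := by
      refine ⟨0, ?_⟩
      rintro _ ⟨Y, _, rfl⟩
      unfold dDist
      exact Finset.sum_nonneg fun i _ => by split_ifs with h; exacts [le_refl 0, hp0 i]
    have hle : dSetDist p X L / 2 ≤ dSetDist (granDist a) (gcatS X) (gcatS '' L) := by
      unfold dSetDist
      apply le_csInf
      · exact (hL.image _).image _
      · rintro _ ⟨_, ⟨Y, hY, rfl⟩, rfl⟩
        have h1 : sInf ((fun y => dDist p X y) '' L) ≤ dDist p X Y :=
          csInf_le hS ⟨Y, hY, rfl⟩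
        calc sInf ((fun y => dDist p X y) '' L) / 2 ≤ dDist p X Y / 2 := by linarith
        _ ≤ _ := key Y
    have : ε / 2 < dSetDist p X L / 2 := by
      unfold dSetDist at hd ⊢; linarith
    linarith
  · intro hX
    exact Set.mem_image_of_mem _ hX
end
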